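/- Let n = 2 and 0 < ε < 1/4. With F, P, F_o the 2×2 tile, discrete set, and enlarged tile defined below, for every p ∈ P the number of p' ∈ P such that F̄·p ∩ F_o·p' ≠ ∅ is at most 33; and for 1/4 ≤ ε < 1/2 it is at most 36. -/

import Mathlib

noncomputable section

/-- The 2×2 discrete set `P = {2^λ • [[2^κ, 2^{-κ}μ],[0, 2^{-κ}]] : λ, κ, μ ∈ ℤ}`. -/
def P2 : Set (Matrix (Fin 2) (Fin 2) ℝ) :=
  {p | ∃ lam κ μ : ℤ,
    p = (2 : ℝ) ^ lam • !![(2 : ℝ) ^ κ, (2 : ℝ) ^ (-κ) * (μ : ℝ); 0, (2 : ℝ) ^ (-κ)]}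

/-- The 2×2 tile `F = {s • k * [[w, wy],[0, w⁻¹]] : s, w ∈ [1,2), y ∈ [0,1), k ∈ O₂(ℝ)}`. -/
def F2 : Set (Matrix (Fin 2) (Fin 2) ℝ) :=
  {a | ∃ (s w y : ℝ) (k : Matrix (Fin 2) (Fin 2) ℝ),
    s ∈ Set.Ico (1 : ℝ) 2 ∧ w ∈ Set.Ico (1 : ℝ) 2 ∧ y ∈ Set.Ico (0 : ℝ) 1 ∧
    k.transpose * k = 1 ∧
    a = s • (k * !![w, w * y; 0, w⁻¹])}

/-- The 2×2 enlarged tile `F_o`, with `s, w ∈ (1-ε, 2+ε)` and `y ∈ (-ε, 1+ε)`. -/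
def Fo2 (ε : ℝ) : Set (Matrix (Fin 2) (Fin 2) ℝ) :=
  {a | ∃ (s w y : ℝ) (k : Matrix (Fin 2) (Fin 2) ℝ),
    s ∈ Set.Ioo (1 - ε) (2 + ε) ∧ w ∈ Set.Ioo (1 - ε) (2 + ε) ∧
    y ∈ Set.Ioo (-ε) (1 + ε) ∧
    k.transpose * k = 1 ∧
    a = s • (k * !![w, w * y; 0, w⁻¹])}

noncomputable section

def K2 : Set (Matrix (Fin 2) (Fin 2) ℝ) := {k | k.transpose * k = 1}

theorem K2_compact : IsCompact K2 := by
  have hclosed : IsClosed K2 := by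
    have : Continuous fun k : Matrix (Fin 2) (Fin 2) ℝ => k.transpose * k :=
      (continuous_id.matrix_transpose).matrix_mul continuous_id
    exact isClosed_eq this continuous_const
  have hbox : IsCompact (Set.univ.pi fun _ : Fin 2 =>
      (Set.univ.pi fun _ : Fin 2 => Set.Icc (-1:ℝ) 1) : Set (Matrix (Fin 2) (Fin 2) ℝ)) := by
    exact isCompact_univ_pi fun _ => isCompact_univ_pi fun _ => isCompact_Icc
  refine hbox.of_isClosed_subset hclosed ?_
  intro k hk
  simp only [Set.mem_pi, Set.mem_univ, forall_true_left, Set.mem_Icc]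
  intro i j
  have h := congrArg (fun m : Matrix (Fin 2) (Fin 2) ℝ => m j j)
    (show Matrix.transpose (Matrix.of k) * Matrix.of k = 1 from hk)
  simp [Matrix.mul_apply, Fin.sum_univ_two, Matrix.transpose_apply, Matrix.one_apply] at h
  fin_cases i <;> simp only [Fin.zero_eta, Fin.mk_one, id_eq] <;>
    constructor <;> nlinarith [sq_nonneg (k 0 j), sq_nonneg (k 1 j)]

def C2 : Set (Matrix (Fin 2) (Fin 2) ℝ) :=
  {a | ∃ (s w y v : ℝ) (k : Matrix (Fin 2) (Fin 2) ℝ),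
    s ∈ Set.Icc (1 : ℝ) 2 ∧ w ∈ Set.Icc (1 : ℝ) 2 ∧ y ∈ Set.Icc (0 : ℝ) 1 ∧
    w * v = 1 ∧ k.transpose * k = 1 ∧ a = s • (k * !![w, w * y; 0, v])}

theorem closure_F2_subset : closure F2 ⊆ C2 := by
  have hD : IsCompact ({x : ℝ × ℝ × ℝ × ℝ × Matrix (Fin 2) (Fin 2) ℝ |
      x.1 ∈ Set.Icc (1:ℝ) 2 ∧ x.2.1 ∈ Set.Icc (1:ℝ) 2 ∧ x.2.2.1 ∈ Set.Icc (0:ℝ) 1 ∧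
      x.2.2.2.1 ∈ Set.Icc (2⁻¹:ℝ) 1 ∧ x.2.2.2.2 ∈ K2 ∧ x.2.1 * x.2.2.2.1 = 1}) := by
    have h1 : IsCompact (Set.Icc (1:ℝ) 2 ×ˢ (Set.Icc (1:ℝ) 2 ×ˢ (Set.Icc (0:ℝ) 1 ×ˢ
        (Set.Icc (2⁻¹:ℝ) 1 ×ˢ K2)))) :=
      isCompact_Icc.prod (isCompact_Icc.prod (isCompact_Icc.prod (isCompact_Icc.prod K2_compact)))
    have h2 : IsClosed {x : ℝ × ℝ × ℝ × ℝ × Matrix (Fin 2) (Fin 2) ℝ |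
        x.2.1 * x.2.2.2.1 = 1} :=
      isClosed_eq (by fun_prop) continuous_const
    have : ({x : ℝ × ℝ × ℝ × ℝ × Matrix (Fin 2) (Fin 2) ℝ |
      x.1 ∈ Set.Icc (1:ℝ) 2 ∧ x.2.1 ∈ Set.Icc (1:ℝ) 2 ∧ x.2.2.1 ∈ Set.Icc (0:ℝ) 1 ∧
      x.2.2.2.1 ∈ Set.Icc (2⁻¹:ℝ) 1 ∧ x.2.2.2.2 ∈ K2 ∧ x.2.1 * x.2.2.2.1 = 1}) =
      (Set.Icc (1:ℝ) 2 ×ˢ (Set.Icc (1:ℝ) 2 ×ˢ (Set.Icc (0:ℝ) 1 ×ˢ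
        (Set.Icc (2⁻¹:ℝ) 1 ×ˢ K2)))) ∩
      {x | x.2.1 * x.2.2.2.1 = 1} := by
      ext x; simp [Set.mem_prod, and_assoc]
    rw [this]
    exact h1.inter_right h2
  have hcont : Continuous (fun x : ℝ × ℝ × ℝ × ℝ × Matrix (Fin 2) (Fin 2) ℝ =>
      x.1 • (x.2.2.2.2 * !![x.2.1, x.2.1 * x.2.2.1; 0, x.2.2.2.1])) := by
    refine Continuous.smul continuous_fst ?_
    refine Continuous.matrix_mul (by fun_prop) ?_
    refine continuous_matrix ?_
    intro i j
    fin_cases i <;> fin_cases j <;> simp <;> fun_prop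
  have himg : IsCompact ((fun x : ℝ × ℝ × ℝ × ℝ × Matrix (Fin 2) (Fin 2) ℝ =>
      x.1 • (x.2.2.2.2 * !![x.2.1, x.2.1 * x.2.2.1; 0, x.2.2.2.1])) '' _) :=
    hD.image hcont
  refine closure_minimal ?_ (himg.isClosed) |>.trans ?_
  · rintro a ⟨s, w, y, k, hs, hw, hy, hk, rfl⟩
    refine ⟨(s, w, y, w⁻¹, k), ?_, ?_⟩
    · have hw0 : (0:ℝ) < w := by linarith [hw.1]
      have hinv := mul_inv_cancel₀ (ne_of_gt hw0)
      have hnn := inv_nonneg.mpr hw0.le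
      exact ⟨⟨hs.1, hs.2.le⟩, ⟨hw.1, hw.2.le⟩, ⟨hy.1, hy.2.le⟩,
        Set.mem_Icc.mpr ⟨by nlinarith [hw.2], by nlinarith [hw.1]⟩, hk, hinv⟩
    · rfl
  · rintro a ⟨⟨s, w, y, v, k⟩, ⟨hs, hw, hy, hv, hk, hwv⟩, rfl⟩
    exact ⟨s, w, y, v, k, hs, hw, hy, hwv, hk, rfl⟩
set_option maxHeartbeats 1000000 in
open Matrix in
theorem key2 (ε s w y v s' w' y' : ℝ) (k k' : Matrix (Fin 2) (Fin 2) ℝ)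
    (lam κ μ lam' κ' μ' : ℤ)
    (hε : 0 < ε) (hε2 : ε < 1/2)
    (hs : s ∈ Set.Icc (1:ℝ) 2) (hw : w ∈ Set.Icc (1:ℝ) 2) (hy : y ∈ Set.Icc (0:ℝ) 1)
    (hv : w * v = 1)
    (hs' : s' ∈ Set.Ioo (1-ε) (2+ε)) (hw' : w' ∈ Set.Ioo (1-ε) (2+ε))
    (hy' : y' ∈ Set.Ioo (-ε) (1+ε))
    (hk : kᵀ * k = 1) (hk' : k'ᵀ * k' = 1)
    (heq : (s • (k * !![w, w*y; 0, v])) * ((2:ℝ)^lam • !![(2:ℝ)^κ, (2:ℝ)^(-κ) * μ; 0, (2:ℝ)^(-κ)]) =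
           (s' • (k' * !![w', w'*y'; 0, w'⁻¹])) * ((2:ℝ)^lam' • !![(2:ℝ)^κ', (2:ℝ)^(-κ') * μ'; 0, (2:ℝ)^(-κ')])) :
    (lam - 1 ≤ lam' ∧ lam' ≤ lam + 1) ∧ (κ - 1 ≤ κ' ∧ κ' ≤ κ + 1) ∧
    ((2:ℝ)^(2*(κ'-κ)) * μ - 1 - ε < μ' ∧ (μ':ℝ) < (2:ℝ)^(2*(κ'-κ)) * μ + (2:ℝ)^(2*(κ'-κ)) + ε) := by
  have two_ne : (2:ℝ) ≠ 0 := by norm_num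
  have hs0 : (0:ℝ) < s := by linarith [hs.1]
  have hw0 : (0:ℝ) < w := by linarith [hw.1]
  have hs'0 : (0:ℝ) < s' := by linarith [hs'.1]
  have hw'0 : (0:ℝ) < w' := by linarith [hw'.1]
  have hv0 : (0:ℝ) < v := by nlinarith [hv]
  have hcl : (0:ℝ) < (2:ℝ)^lam := zpow_pos (by norm_num) _
  have hcl' : (0:ℝ) < (2:ℝ)^lam' := zpow_pos (by norm_num) _
  have hcκ : (0:ℝ) < (2:ℝ)^κ := zpow_pos (by norm_num) _
  have hcκ' : (0:ℝ) < (2:ℝ)^κ' := zpow_pos (by norm_num) _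
  have hR : (0:ℝ) < (2:ℝ)^(2*(κ'-κ)) := zpow_pos (by norm_num) _
  have h1 : s • (k * (!![w, w*y; 0, v] * ((2:ℝ)^lam • !![(2:ℝ)^κ, (2:ℝ)^(-κ) * μ; 0, (2:ℝ)^(-κ)])))
      = s' • (k' * (!![w', w'*y'; 0, w'⁻¹] * ((2:ℝ)^lam' • !![(2:ℝ)^κ', (2:ℝ)^(-κ') * μ'; 0, (2:ℝ)^(-κ')]))) := by
    simpa only [Matrix.smul_mul, Matrix.mul_assoc] using heq
  have h2 := congrArg (fun m => k'ᵀ * m) h1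
  simp only [Matrix.mul_smul, ← Matrix.mul_assoc, hk', Matrix.one_mul] at h2
  have hq : (k'ᵀ * k)ᵀ * (k'ᵀ * k) = 1 := by
    have hkk' : k' * k'ᵀ = 1 := mul_eq_one_comm.mp hk'
    calc (k'ᵀ * k)ᵀ * (k'ᵀ * k) = kᵀ * (k' * k'ᵀ) * k := by
          simp [Matrix.transpose_mul, Matrix.mul_assoc]
      _ = 1 := by rw [hkk', Matrix.mul_one]; exact hk
  set q := k'ᵀ * k with hqdef
  have e10 := congrArg (fun m => m 1 0) h2
  have e00 := congrArg (fun m => m 0 0) h2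
  have e11 := congrArg (fun m => m 1 1) h2
  have e01 := congrArg (fun m => m 0 1) h2
  have o00 := congrArg (fun m => m 0 0) hq
  have o01 := congrArg (fun m => m 0 1) hq
  have o11 := congrArg (fun m => m 1 1) hq
  simp [Matrix.mul_apply, Matrix.smul_apply, Fin.sum_univ_two,
    Matrix.one_apply] at e10 e00 e11 e01 o00 o01 o11
  -- q 1 0 = 0
  have q10 : q 1 0 = 0 := by
    rcases e10 with h | h | (h | h) | h
    · exact absurd h (ne_of_gt hs0)
    · exact absurd h (ne_of_gt hcl)
    · exact h
    · exact absurd h (ne_of_gt hw0)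
    · exact absurd h (ne_of_gt hcκ)
  rw [q10] at o00 o01 e11
  simp only [zero_mul, mul_zero, add_zero, zero_add] at o00 o01 e11
  have hq00sq : q 0 0 * q 0 0 = 1 := o00
  have hq00ne : q 0 0 ≠ 0 := by intro h; rw [h] at hq00sq; norm_num at hq00sq
  have q01 : q 0 1 = 0 := by
    rcases mul_eq_zero.mp o01 with h | h
    · exact absurd h hq00ne
    · exact h
  rw [q01] at o11 e01
  simp only [zero_mul, mul_zero, add_zero, zero_add] at o11 e01
  -- q 0 0 = 1
  have hq00pos : 0 < q 0 0 := by
    by_contra h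
    push_neg at h
    nlinarith [e00, mul_pos (mul_pos hs'0 hcl') (mul_pos hw'0 hcκ'),
      mul_pos (mul_pos hs0 hcl) (mul_pos hw0 hcκ)]
  have hq001 : q 0 0 = 1 := by
    have hfac : (q 0 0 - 1) * (q 0 0 + 1) = 0 := by linear_combination hq00sq
    rcases mul_eq_zero.mp hfac with h | h
    · linarith
    · linarith
  rw [hq001] at e00 e01
  simp only [one_mul] at e00 e01
  have hq11pos : 0 < q 1 1 := by
    have hC : 0 < s * (2^lam * (v * ((2:ℝ)^κ)⁻¹)) := by positivity
    have hD : 0 < s' * (2^lam' * (w'⁻¹ * ((2:ℝ)^κ')⁻¹)) := by positivity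
    have hL : q 1 1 * (s * (2^lam * (v * ((2:ℝ)^κ)⁻¹))) = s' * (2^lam' * (w'⁻¹ * ((2:ℝ)^κ')⁻¹)) := by
      linear_combination e11
    rcases mul_pos_iff.mp (hL ▸ hD : 0 < q 1 1 * (s * (2^lam * (v * ((2:ℝ)^κ)⁻¹)))) with
      ⟨h1', _⟩ | ⟨_, h2'⟩
    · exact h1'
    · linarith
  have hq111 : q 1 1 = 1 := by
    have hfac : (q 1 1 - 1) * (q 1 1 + 1) = 0 := by linear_combination o11
    rcases mul_eq_zero.mp hfac with h | h
    · linarith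
    · linarith
  rw [hq111] at e11
  simp only [one_mul] at e11
  clear_value q
  clear heq h1 h2 hq hqdef e10 o00 o01 o11 hq00sq hq00ne q10 q01 hk hk' k k'
  have hκne : ((2:ℝ)^κ) ≠ 0 := ne_of_gt hcκ
  have hκ'ne : ((2:ℝ)^κ') ≠ 0 := ne_of_gt hcκ'
  have hw'ne : w' ≠ 0 := ne_of_gt hw'0
  field_simp at e11 e01
  -- s*2^lam = s'*2^lam'  and  w*2^κ = w'*2^κ'
  have hA2' : (s*2^lam) * (s*2^lam) * (w' * 2^κ * 2^κ') =
      (s'*2^lam') * (s'*2^lam') * (w' * 2^κ * 2^κ') := by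
    have e0011 : (s * (2 ^ lam * (w * 2 ^ κ))) * (s * (2 ^ lam * v) * (w' * 2 ^ κ')) =
        (s' * (2 ^ lam' * (w' * 2 ^ κ'))) * (s' * 2 ^ lam' * 2 ^ κ) := by
      rw [e00]; linear_combination (s' * (2 ^ lam' * (w' * 2 ^ κ'))) * e11
    linear_combination e0011 - (s*2^lam*(s*2^lam)*w'*(2:ℝ)^κ*(2:ℝ)^κ') * hv
  have hA2 : (s*2^lam) * (s*2^lam) = (s'*2^lam') * (s'*2^lam') :=
    mul_right_cancel₀ (by positivity) hA2'
  have hAA : s*2^lam = s'*2^lam' := by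
    have hfac : (s*2^lam - s'*2^lam')*(s*2^lam + s'*2^lam') = 0 := by linear_combination hA2
    rcases mul_eq_zero.mp hfac with h | h
    · exact sub_eq_zero.mp h
    · exfalso
      nlinarith [mul_pos hs0 hcl, mul_pos hs'0 hcl']
  have hU : w * 2^κ = w' * 2^κ' := by
    apply mul_left_cancel₀ (ne_of_gt (mul_pos hs0 hcl))
    calc (s*2^lam) * (w*2^κ) = s' * 2^lam' * (w' * 2^κ') := by linear_combination e00
      _ = (s*2^lam) * (w'*2^κ') := by rw [hAA]
  have hratio : s' = s * (2:ℝ)^(lam - lam') := by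
    have h2 : (2:ℝ)^(lam - lam') * (2:ℝ)^lam' = (2:ℝ)^lam := by
      rw [← zpow_add₀ two_ne]; congr 1; ring
    apply mul_right_cancel₀ (ne_of_gt hcl')
    linear_combination (-1) * hAA - s * h2
  have hwratio : w' = w * (2:ℝ)^(κ - κ') := by
    have h2 : (2:ℝ)^(κ - κ') * (2:ℝ)^κ' = (2:ℝ)^κ := by
      rw [← zpow_add₀ two_ne]; congr 1; ring
    apply mul_right_cancel₀ (ne_of_gt hcκ')
    linear_combination (-1) * hU - w * h2
  have hlam1 : lam - 1 ≤ lam' := by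
    by_contra h
    push_neg at h
    have h2 : (2:ℝ)^(2:ℤ) ≤ (2:ℝ)^(lam - lam') :=
      zpow_le_zpow_right₀ (by norm_num) (by omega)
    rw [show ((2:ℝ)^(2:ℤ)) = 4 by norm_num] at h2
    nlinarith [hs.1, hs'.2, hratio, h2]
  have hlam2 : lam' ≤ lam + 1 := by
    by_contra h
    push_neg at h
    have h2 : (2:ℝ)^(lam - lam') ≤ (2:ℝ)^(-2:ℤ) :=
      zpow_le_zpow_right₀ (by norm_num) (by omega)
    rw [show ((2:ℝ)^(-2:ℤ)) = 1/4 by norm_num] at h2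
    have hpp : (0:ℝ) < (2:ℝ)^(lam - lam') := zpow_pos (by norm_num) _
    nlinarith [hs.2, hs'.1, hratio, h2, hpp]
  have hκ1 : κ - 1 ≤ κ' := by
    by_contra h
    push_neg at h
    have h2 : (2:ℝ)^(2:ℤ) ≤ (2:ℝ)^(κ - κ') :=
      zpow_le_zpow_right₀ (by norm_num) (by omega)
    rw [show ((2:ℝ)^(2:ℤ)) = 4 by norm_num] at h2
    nlinarith [hw.1, hw'.2, hwratio, h2]
  have hκ2 : κ' ≤ κ + 1 := by
    by_contra h
    push_neg at h
    have h2 : (2:ℝ)^(κ - κ') ≤ (2:ℝ)^(-2:ℤ) :=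
      zpow_le_zpow_right₀ (by norm_num) (by omega)
    rw [show ((2:ℝ)^(-2:ℤ)) = 1/4 by norm_num] at h2
    have hpp : (0:ℝ) < (2:ℝ)^(κ - κ') := zpow_pos (by norm_num) _
    nlinarith [hw.2, hw'.1, hwratio, h2, hpp]
  have E3 : (w*(μ:ℝ) + w*y) * 2^κ' = (w'*(μ':ℝ) + w'*y') * 2^κ := by
    apply mul_left_cancel₀ (ne_of_gt (mul_pos hs0 hcl))
    calc (s*2^lam) * ((w*(μ:ℝ) + w*y) * 2^κ')
        = s' * 2^lam' * ((w'*(μ':ℝ) + w'*y') * 2^κ) := by linear_combination e01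
      _ = (s*2^lam) * ((w'*(μ':ℝ) + w'*y') * 2^κ) := by rw [hAA]
  have hpow : (2:ℝ)^(2*(κ'-κ)) * ((2:ℝ)^κ * (2:ℝ)^κ) = (2:ℝ)^κ' * (2:ℝ)^κ' := by
    rw [← zpow_add₀ two_ne, ← zpow_add₀ two_ne, ← zpow_add₀ two_ne]; congr 1; ring
  have hkey' : ((μ':ℝ) + y') * (w * ((2:ℝ)^κ * (2:ℝ)^κ)) =
      (2:ℝ)^(2*(κ'-κ)) * ((μ:ℝ) + y) * (w * ((2:ℝ)^κ * (2:ℝ)^κ)) := by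
    linear_combination (-((2:ℝ)^κ')) * E3 - (w*((μ:ℝ)+y)) * hpow +
      (((μ':ℝ)+y')*(2:ℝ)^κ) * hU
  have hkey : ((μ':ℝ) + y') = (2:ℝ)^(2*(κ'-κ)) * ((μ:ℝ) + y) :=
    mul_right_cancel₀ (by positivity) hkey'
  refine ⟨⟨hlam1, hlam2⟩, ⟨hκ1, hκ2⟩, ?_, ?_⟩
  · nlinarith [hkey, hy'.2, mul_nonneg hR.le hy.1]
  · nlinarith [hkey, hy'.1, mul_le_mul_of_nonneg_left hy.2 hR.le]

set_option maxHeartbeats 1000000 in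
/-- For `n = 2` and `0 < ε < 1/4`, for every `p ∈ P` the number of
`p' ∈ P` with `F̄·p ∩ F_o·p' ≠ ∅` is at most `33`; and for `1/4 ≤ ε < 1/2` it is at
most `36`. -/
theorem stmt_17 (ε : ℝ) (hε : 0 < ε) (hε' : ε < 1 / 2)
    (p : Matrix (Fin 2) (Fin 2) ℝ) (hp : p ∈ P2) :
    {p' ∈ P2 | (((· * p) '' closure F2) ∩ ((· * p') '' Fo2 ε)).Nonempty}.Finite ∧
    (ε < 1 / 4 →
      {p' ∈ P2 | (((· * p) '' closure F2) ∩ ((· * p') '' Fo2 ε)).Nonempty}.ncard ≤ 33) ∧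
    (1 / 4 ≤ ε →
      {p' ∈ P2 | (((· * p) '' closure F2) ∩ ((· * p') '' Fo2 ε)).Nonempty}.ncard ≤ 36) := by
  classical
  obtain ⟨lam, κ, μ, hpdef⟩ := hp
  set f : ℤ × ℤ × ℤ → Matrix (Fin 2) (Fin 2) ℝ := fun t =>
    (2:ℝ)^t.1 • !![(2:ℝ)^t.2.1, (2:ℝ)^(-t.2.1) * (t.2.2 : ℝ); 0, (2:ℝ)^(-t.2.1)] with hf
  set lo : ℤ → ℤ := fun t => ⌊(2:ℝ)^(2*t) * μ - 1 - ε⌋ + 1 with hlo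
  set hi : ℤ → ℤ := fun t => ⌈(2:ℝ)^(2*t) * μ + (2:ℝ)^(2*t) + ε⌉ - 1 with hhi
  set T : Finset (ℤ × ℤ × ℤ) :=
    (Finset.Icc (lam-1) (lam+1)) ×ˢ
      ((Finset.Icc (κ-1) (κ+1)).biUnion fun c => {c} ×ˢ Finset.Icc (lo (c - κ)) (hi (c - κ)))
    with hT
  have hsub : {p' ∈ P2 | (((· * p) '' closure F2) ∩ ((· * p') '' Fo2 ε)).Nonempty} ⊆
      f '' ↑T := by
    rintro p' ⟨⟨lam', κ', μ', rfl⟩, x, ⟨a, ha, hax⟩, ⟨b, hb, hbx⟩⟩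
    obtain ⟨s, w, y, v, k, hs, hw, hy, hv, hk, rfl⟩ := closure_F2_subset ha
    obtain ⟨s', w', y', k', hs', hw', hy', hk', rfl⟩ := hb
    have heq : (s • (k * !![w, w*y; 0, v])) *
          ((2:ℝ)^lam • !![(2:ℝ)^κ, (2:ℝ)^(-κ) * (μ:ℝ); 0, (2:ℝ)^(-κ)]) =
        (s' • (k' * !![w', w'*y'; 0, w'⁻¹])) *
          ((2:ℝ)^lam' • !![(2:ℝ)^κ', (2:ℝ)^(-κ') * (μ':ℝ); 0, (2:ℝ)^(-κ')]) := by
      rw [← hpdef]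
      exact hax.trans hbx.symm
    obtain ⟨⟨hl1, hl2⟩, ⟨hk1, hk2⟩, hm1, hm2⟩ := key2 ε s w y v s' w' y' k k'
      lam κ μ lam' κ' μ' hε hε' hs hw hy hv hs' hw' hy' hk hk' heq
    refine ⟨(lam', κ', μ'), ?_, rfl⟩
    rw [Finset.mem_coe, hT, Finset.mem_product]
    refine ⟨Finset.mem_Icc.mpr ⟨by omega, by omega⟩, ?_⟩
    rw [Finset.mem_biUnion]
    refine ⟨κ', Finset.mem_Icc.mpr ⟨by omega, by omega⟩, ?_⟩
    rw [Finset.mem_product, Finset.mem_singleton]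
    refine ⟨rfl, Finset.mem_Icc.mpr ⟨?_, ?_⟩⟩
    · have h1 : ⌊(2:ℝ)^(2*(κ'-κ)) * μ - 1 - ε⌋ < μ' := Int.floor_lt.mpr (by exact_mod_cast hm1)
      simp only [hlo]
      omega
    · have h1 : μ' < ⌈(2:ℝ)^(2*(κ'-κ)) * μ + (2:ℝ)^(2*(κ'-κ)) + ε⌉ :=
        Int.lt_ceil.mpr (by exact_mod_cast hm2)
      simp only [hhi]
      omega
  have hfin : (f '' ↑T).Finite := T.finite_toSet.image f
  have hcardIcc : ∀ (t : ℤ) (n : ℕ), ((2:ℝ)^(2*t) + 2 + 2*ε < (n:ℝ) + 1) →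
      (Finset.Icc (lo t) (hi t)).card ≤ n := by
    intro t n hbound
    rw [Int.card_Icc, Int.toNat_le]
    have h1 : (⌈(2:ℝ)^(2*t)*μ + (2:ℝ)^(2*t) + ε⌉ : ℝ) <
        ((2:ℝ)^(2*t)*μ + (2:ℝ)^(2*t) + ε) + 1 := Int.ceil_lt_add_one _
    have h2 : ((2:ℝ)^(2*t)*μ - 1 - ε) - 1 < (⌊(2:ℝ)^(2*t)*μ - 1 - ε⌋ : ℝ) :=
      Int.sub_one_lt_floor _
    have h3 : ((hi t + 1 - lo t : ℤ) : ℝ) < (n:ℝ) + 1 := by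
      simp only [hlo, hhi]
      push_cast
      linarith
    exact_mod_cast Int.lt_add_one_iff.mp (by exact_mod_cast h3)
  have hIcc3 : Finset.Icc (κ-1) (κ+1) = {κ-1, κ, κ+1} := by
    ext z
    simp only [Finset.mem_Icc, Finset.mem_insert, Finset.mem_singleton]
    omega
  have hBsum : ∀ n₁ n₂ n₃ : ℕ,
      (Finset.Icc (lo (-1)) (hi (-1))).card ≤ n₁ →
      (Finset.Icc (lo 0) (hi 0)).card ≤ n₂ →
      (Finset.Icc (lo 1) (hi 1)).card ≤ n₃ →
      ((Finset.Icc (κ-1) (κ+1)).biUnion fun c =>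
        {c} ×ˢ Finset.Icc (lo (c - κ)) (hi (c - κ))).card ≤ n₁ + n₂ + n₃ := by
    intro n₁ n₂ n₃ hc1 hc2 hc3
    refine (Finset.card_biUnion_le).trans ?_
    rw [hIcc3]
    rw [Finset.sum_insert (by simp only [Finset.mem_insert, Finset.mem_singleton]; omega),
      Finset.sum_insert (by simp only [Finset.mem_singleton]; omega),
      Finset.sum_singleton]
    have e1 : κ - 1 - κ = (-1 : ℤ) := by ring
    have e2 : κ - κ = (0 : ℤ) := by ring
    have e3 : κ + 1 - κ = (1 : ℤ) := by ring
    rw [e1, e2, e3]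
    simp only [Finset.card_product, Finset.card_singleton, one_mul]
    omega
  have hTcard : ∀ m : ℕ,
      (((Finset.Icc (κ-1) (κ+1)).biUnion fun c =>
        {c} ×ˢ Finset.Icc (lo (c - κ)) (hi (c - κ))).card ≤ m) → T.card ≤ 3 * m := by
    intro m hm
    rw [hT, Finset.card_product]
    have : (Finset.Icc (lam-1) (lam+1)).card = 3 := by
      rw [Int.card_Icc]
      omega
    rw [this]
    omega
  have hc2' : (2:ℝ)^(2*(0:ℤ)) = 1 := by norm_num
  have hc1' : (2:ℝ)^(2*(-1:ℤ)) = 1/4 := by norm_num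
  have hc3' : (2:ℝ)^(2*(1:ℤ)) = 4 := by norm_num
  have hncard : ∀ m : ℕ, T.card ≤ m →
      {p' ∈ P2 | (((· * p) '' closure F2) ∩ ((· * p') '' Fo2 ε)).Nonempty}.ncard ≤ m := by
    intro m hm
    calc {p' ∈ P2 | (((· * p) '' closure F2) ∩ ((· * p') '' Fo2 ε)).Nonempty}.ncard
        ≤ (f '' ↑T).ncard := Set.ncard_le_ncard hsub hfin
      _ ≤ (↑T : Set (ℤ × ℤ × ℤ)).ncard := Set.ncard_image_le T.finite_toSet
      _ = T.card := Set.ncard_coe_finset T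
      _ ≤ m := hm
  refine ⟨hfin.subset hsub, ?_, ?_⟩
  · intro h4
    refine hncard 33 ?_
    have h33 : (11 : ℕ) = 2 + 3 + 6 := by norm_num
    refine (hTcard 11 ?_).trans (by norm_num)
    rw [h33]
    refine hBsum 2 3 6 (hcardIcc _ 2 ?_) (hcardIcc _ 3 ?_) (hcardIcc _ 6 ?_)
    · rw [hc1']; push_cast; linarith
    · rw [hc2']; push_cast; linarith
    · rw [hc3']; push_cast; linarith
  · intro h4
    refine hncard 36 ?_
    have h36 : (12 : ℕ) = 3 + 3 + 6 := by norm_num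
    refine (hTcard 12 ?_).trans (by norm_num)
    rw [h36]
    refine hBsum 3 3 6 (hcardIcc _ 3 ?_) (hcardIcc _ 3 ?_) (hcardIcc _ 6 ?_)
    · rw [hc1']; push_cast; linarith
    · rw [hc2']; push_cast; linarith
    · rw [hc3']; push_cast; linarith
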